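/- For all integers p, q ≥ 1 and n ≥ 0, the number WK_{p,q}(n) of weightings of the complete bipartite graph K_{p,q} satisfies WK_{p,q}(n) = ∑_{k=0}^{n} ((k+1)^p − k^p) · (n+1−k)^q. -/

import Mathlib

/-- `WG G n` is the number of weightings `α : V → {0,…,n}` of the simple graph `G`
such that `α u + α v ≤ n` for every edge `uv`. -/
noncomputable def WG {V : Type*} [Fintype V] (G : SimpleGraph V) (n : ℕ) : ℕ :=
  Nat.card {α : V → ℕ // (∀ v, α v ≤ n) ∧ ∀ u v, G.Adj u v → α u + α v ≤ n}

lemma card_lt_filter (r m n : ℕ) (h : m ≤ n + 1) :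
    (Finset.univ.filter (fun f : Fin r → Fin (n+1) => ∀ a, (f a : ℕ) < m)).card = m ^ r := by
  rw [← Fintype.card_subtype]
  have e : {f : Fin r → Fin (n+1) // ∀ a, (f a : ℕ) < m} ≃ (Fin r → Fin m) :=
    { toFun := fun f a => ⟨f.1 a, f.2 a⟩
      invFun := fun g => ⟨fun a => ⟨g a, by have := (g a).2; omega⟩, fun a => (g a).2⟩
      left_inv := fun f => by ext a; simp
      right_inv := fun g => by ext a; simp }
  rw [Fintype.card_congr e]
  simp

theorem complete_bipartite_weightings (p q : ℕ) (hp : 1 ≤ p) (hq : 1 ≤ q) (n : ℕ) :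
    WG (completeBipartiteGraph (Fin p) (Fin q)) n
      = ∑ k ∈ Finset.range (n + 1), ((k + 1) ^ p - k ^ p) * (n + 1 - k) ^ q := by

  -- Step 1: transfer to a subtype of pairs of Fin-valued functions
  have e : {α : (Fin p ⊕ Fin q) → ℕ //
        (∀ v, α v ≤ n) ∧ ∀ u v, (completeBipartiteGraph (Fin p) (Fin q)).Adj u v → α u + α v ≤ n}
      ≃ {x : (Fin p → Fin (n+1)) × (Fin q → Fin (n+1)) //
        ∀ a b, (x.1 a : ℕ) + (x.2 b : ℕ) ≤ n} :=
    { toFun := fun α => ⟨(fun a => ⟨α.1 (Sum.inl a), by have := α.2.1 (Sum.inl a); omega⟩,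
        fun b => ⟨α.1 (Sum.inr b), by have := α.2.1 (Sum.inr b); omega⟩),
        fun a b => α.2.2 (Sum.inl a) (Sum.inr b) (by simp)⟩
      invFun := fun x => ⟨Sum.elim (fun a => (x.1.1 a : ℕ)) (fun b => (x.1.2 b : ℕ)), by
        constructor
        · rintro (a | b) <;> simp [Fin.is_le]
        · rintro (a | b) (a' | b') h <;> simp at h ⊢
          · exact x.2 a b'
          · have := x.2 a' b; omega⟩
      left_inv := fun α => by
        ext v; cases v <;> rfl
      right_inv := fun x => by
        ext a <;> rfl }
  rw [WG, Nat.card_congr e, Nat.card_eq_fintype_card, Fintype.card_subtype]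
  -- Step 2: fiberwise sum over the maximum of the first component
  rw [Finset.card_eq_sum_card_fiberwise
    (f := fun x : (Fin p → Fin (n+1)) × (Fin q → Fin (n+1)) =>
      Finset.univ.sup (fun a => (x.1 a : ℕ))) (t := Finset.range (n+1))
    (by intro x _; simp only [Finset.mem_coe, Finset.mem_range, Nat.lt_succ_iff]
        exact Finset.sup_le fun a _ => Fin.is_le _)]
  refine Finset.sum_congr rfl fun k hk => ?_
  rw [Finset.mem_range, Nat.lt_succ_iff] at hk
  -- Step 3: rewrite the fiber as a product of two conditions
  have hne : (Finset.univ : Finset (Fin p)).Nonempty := ⟨⟨0, hp⟩, Finset.mem_univ _⟩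
  have hfe : (Finset.univ.filter (fun x : (Fin p → Fin (n+1)) × (Fin q → Fin (n+1)) =>
        (∀ a b, (x.1 a : ℕ) + (x.2 b : ℕ) ≤ n)) ).filter
        (fun x => Finset.univ.sup (fun a => (x.1 a : ℕ)) = k)
      = Finset.univ.filter (fun x : (Fin p → Fin (n+1)) × (Fin q → Fin (n+1)) =>
        ((∀ a, (x.1 a : ℕ) ≤ k) ∧ ¬ (∀ a, (x.1 a : ℕ) < k)) ∧ (∀ b, (x.2 b : ℕ) ≤ n - k)) := by
    ext x
    simp only [Finset.filter_filter, Finset.mem_filter, Finset.mem_univ, true_and]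
    constructor
    · rintro ⟨hP, hsup⟩
      obtain ⟨a0, -, ha0⟩ := Finset.exists_mem_eq_sup Finset.univ hne (fun a => (x.1 a : ℕ))
      rw [hsup] at ha0
      have ha0' : k = (x.1 a0 : ℕ) := ha0
      refine ⟨⟨fun a => hsup ▸ Finset.le_sup (f := fun a => ((x.1 a : ℕ))) (Finset.mem_univ a),
        fun hlt => ?_⟩, fun b => ?_⟩
      · have := hlt a0; omega
      · have := hP a0 b; omega
    · rintro ⟨⟨hle, hnlt⟩, hg⟩
      push_neg at hnlt
      obtain ⟨a0, ha0⟩ := hnlt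
      have hsup : Finset.univ.sup (fun a => (x.1 a : ℕ)) = k :=
        le_antisymm (Finset.sup_le fun a _ => hle a)
          (le_trans ha0 (Finset.le_sup (f := fun a => ((x.1 a : ℕ))) (Finset.mem_univ a0)))
      exact ⟨fun a b => by have := hle a; have := hg b; omega, hsup⟩
  have hprod : (Finset.univ.filter (fun x : (Fin p → Fin (n+1)) × (Fin q → Fin (n+1)) =>
        ((∀ a, (x.1 a : ℕ) ≤ k) ∧ ¬ (∀ a, (x.1 a : ℕ) < k)) ∧ (∀ b, (x.2 b : ℕ) ≤ n - k)))
      = (Finset.univ.filter (fun f : Fin p → Fin (n+1) =>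
          (∀ a, (f a : ℕ) ≤ k) ∧ ¬ (∀ a, (f a : ℕ) < k))) ×ˢ
        (Finset.univ.filter (fun g : Fin q → Fin (n+1) => ∀ b, (g b : ℕ) ≤ n - k)) := by
    ext x
    simp only [Finset.mem_filter, Finset.mem_product, Finset.mem_univ, true_and]
  rw [hfe, hprod, Finset.card_product]
  -- Step 4: compute each factor
  have h1 : (Finset.univ.filter (fun f : Fin p → Fin (n+1) =>
        (∀ a, (f a : ℕ) ≤ k) ∧ ¬ (∀ a, (f a : ℕ) < k))).card = (k+1)^p - k^p := by
    have hsd : Finset.univ.filter (fun f : Fin p → Fin (n+1) =>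
          (∀ a, (f a : ℕ) ≤ k) ∧ ¬ (∀ a, (f a : ℕ) < k))
        = (Finset.univ.filter (fun f : Fin p → Fin (n+1) => ∀ a, (f a : ℕ) < k + 1)) \
          (Finset.univ.filter (fun f : Fin p → Fin (n+1) => ∀ a, (f a : ℕ) < k)) := by
      ext f
      simp only [Finset.mem_filter, Finset.mem_sdiff, Finset.mem_univ, true_and, Nat.lt_succ_iff]
    rw [hsd, Finset.card_sdiff_of_subset (by
        intro f hf
        simp only [Finset.mem_filter, Finset.mem_univ, true_and] at hf ⊢
        exact fun a => Nat.lt_succ_of_lt (hf a)),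
      card_lt_filter p (k+1) n (by omega), card_lt_filter p k n (by omega)]
  have h2 : (Finset.univ.filter (fun g : Fin q → Fin (n+1) =>
        ∀ b, (g b : ℕ) ≤ n - k)).card = (n + 1 - k)^q := by
    have heq : Finset.univ.filter (fun g : Fin q → Fin (n+1) => ∀ b, (g b : ℕ) ≤ n - k)
        = Finset.univ.filter (fun g : Fin q → Fin (n+1) => ∀ b, (g b : ℕ) < n - k + 1) := by
      ext g
      simp only [Finset.mem_filter, Nat.lt_succ_iff]
    rw [heq, card_lt_filter q (n - k + 1) n (Nat.succ_le_succ (Nat.sub_le n k))]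
    congr 1
    exact (Nat.succ_sub hk).symm
  rw [h1, h2]
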